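/- Let E be a complex vector bundle of rank r with Chern roots a_1,...,a_r. Define T̃*_y(E) = ∏_i Q̃_y(a_i) with Q̃_y(a) = a(1+y·exp(-a))/(1-exp(-a)) and T*_y(E) = ∏_i Q_y(a_i) with Q_y(a) = a(1+y)/(1-exp(-a(1+y))) - a·y. Then for each i ≥ 0 the degree-2i component satisfies T̃^i_y(E) = (1+y)^{r-i} · T^i_y(E). -/

import Mathlib

/-!
STATEMENT 4.  Chern-roots formalism: for formal variables `a_1, ..., a_r`
(multivariate power series over `ℚ[y]`, with `emb r j f` denoting the univariate
series `f` placed in the variable `a_j`), the degree-`i` homogeneous component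
(i.e. each coefficient of a monomial `d` of total degree `i`) of
`T̃*_y = ∏_j Q̃_y(a_j)` equals `(1+y)^{r-i}` times the corresponding coefficient of
`T*_y = ∏_j Q_y(a_j)`, as elements of `ℚ[y, (1+y)⁻¹]` (realized as the localization
of `ℚ[y]` away from `1+y`, with `u` the unit `1+y` there, so that `(1+y)^{r-i}`
makes sense as `u^((r:ℤ)-i)`).

Here `t = a/(1-exp(-a))` is characterized by `t * (1-exp(-a)) = a`,
`Q_y(a) = rescale (1+y) t - y·a` and `Q̃_y(a) = t * (1 + y·exp(-a))`.
-/

open PowerSeries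

noncomputable section

/-- The univariate power series `f`, viewed as a multivariate power series in the
single variable `a_j` among `a_1, ..., a_r`. -/
def emb (r : ℕ) (j : Fin r) (f : PowerSeries (Polynomial ℚ)) :
    MvPowerSeries (Fin r) (Polynomial ℚ) :=
  fun d => if d = Finsupp.single j (d j) then PowerSeries.coeff (R := Polynomial ℚ) (d j) f else 0

/-- The ring `ℚ[y, (1+y)⁻¹]`. -/
abbrev Lloc : Type := Localization.Away ((1 : Polynomial ℚ) + Polynomial.X)

lemma coeff_emb (r : ℕ) (j : Fin r) (f : PowerSeries (Polynomial ℚ)) (e : Fin r →₀ ℕ) :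
    MvPowerSeries.coeff (R := Polynomial ℚ) e (emb r j f)
      = if e = Finsupp.single j (e j) then PowerSeries.coeff (R := Polynomial ℚ) (e j) f else 0 :=
  rfl

/-- Coefficient of a product of single-variable embeddings. -/
lemma coeff_prod_emb (f : PowerSeries (Polynomial ℚ)) (r : ℕ) (d : Fin r →₀ ℕ) :
    MvPowerSeries.coeff (R := Polynomial ℚ) d (∏ j : Fin r, emb r j f)
      = ∏ j : Fin r, PowerSeries.coeff (R := Polynomial ℚ) (d j) f := by
  classical
  rw [MvPowerSeries.coeff_prod]
  set l₀ : Fin r →₀ (Fin r →₀ ℕ) :=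
    Finsupp.equivFunOnFinite.symm (fun j => Finsupp.single j (d j)) with hl₀
  have hl₀app : ∀ j, l₀ j = Finsupp.single j (d j) := fun j => rfl
  have hmem : l₀ ∈ Finset.finsuppAntidiag Finset.univ d := by
    rw [Finset.mem_finsuppAntidiag]
    constructor
    · rw [show Finset.univ.sum l₀ = ∑ j : Fin r, Finsupp.single j (d j) from rfl]
      exact Finsupp.univ_sum_single d
    · exact fun x _ => Finset.mem_univ x
  rw [Finset.sum_eq_single l₀]
  · apply Finset.prod_congr rfl
    intro j _
    rw [coeff_emb, hl₀app, if_pos]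
    · simp
    · simp
  · intro l hl hne
    rw [Finset.mem_finsuppAntidiag] at hl
    by_cases hall : ∀ j : Fin r, l j = Finsupp.single j ((l j) j)
    · exfalso
      apply hne
      have hlj : ∀ j : Fin r, (l j) j = d j := by
        intro j
        have := congrArg (fun g => g j) hl.1
        simp only [Finsupp.coe_finset_sum, Finset.sum_apply] at this
        rw [← this]
        rw [Finset.sum_eq_single j]
        · intro b _ hb
          rw [hall b]
          exact Finsupp.single_eq_of_ne hb.symm
        · intro h; exact absurd (Finset.mem_univ j) h
      ext j k
      rw [hl₀app, hall j, hlj j]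
    · push_neg at hall
      obtain ⟨j, hj⟩ := hall
      apply Finset.prod_eq_zero (Finset.mem_univ j)
      rw [coeff_emb, if_neg hj]
  · intro h; exact absurd hmem h

/-- The basic univariate series identity, rescaled by `1+X`. -/
lemma series_identity (t : PowerSeries (Polynomial ℚ))
    (ht : t * (1 - rescale (-1) (PowerSeries.exp (Polynomial ℚ))) = PowerSeries.X) :
    rescale (1 + Polynomial.X)
        (t * (1 + PowerSeries.C (R := Polynomial ℚ) Polynomial.X *
          rescale (-1) (PowerSeries.exp (Polynomial ℚ))))
      = PowerSeries.C (R := Polynomial ℚ) (1 + Polynomial.X) *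
        (rescale (1 + Polynomial.X) t -
          PowerSeries.C (R := Polynomial ℚ) Polynomial.X * PowerSeries.X) := by
  set c : Polynomial ℚ := 1 + Polynomial.X with hc
  have hresC : ∀ a : Polynomial ℚ, rescale c (PowerSeries.C (R := Polynomial ℚ) a)
      = PowerSeries.C (R := Polynomial ℚ) a := by
    intro a
    ext n
    rw [coeff_rescale]
    cases n with
    | zero => simp
    | succ m => simp [PowerSeries.coeff_C]
  have hT : rescale c t * (1 - rescale (-1 * c) (PowerSeries.exp (Polynomial ℚ)))
      = PowerSeries.C (R := Polynomial ℚ) c * PowerSeries.X := by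
    have := congrArg (rescale c) ht
    rw [map_mul, map_sub, map_one, rescale_rescale, rescale_X] at this
    exact this
  rw [map_mul, map_add, map_one, map_mul, rescale_rescale, hresC]
  set T := rescale c t
  set E := rescale (-1 * c) (PowerSeries.exp (Polynomial ℚ))
  have hCc : PowerSeries.C (R := Polynomial ℚ) c
      = 1 + PowerSeries.C (R := Polynomial ℚ) Polynomial.X := by
    rw [hc, map_add, map_one]
  rw [hCc] at hT ⊢
  linear_combination (-(PowerSeries.C (R := Polynomial ℚ) Polynomial.X)) * hT

lemma coeff_identity (t : PowerSeries (Polynomial ℚ))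
    (ht : t * (1 - rescale (-1) (PowerSeries.exp (Polynomial ℚ))) = PowerSeries.X)
    (n : ℕ) :
    (1 + Polynomial.X) ^ n *
        PowerSeries.coeff (R := Polynomial ℚ) n
          (t * (1 + PowerSeries.C (R := Polynomial ℚ) Polynomial.X *
            rescale (-1) (PowerSeries.exp (Polynomial ℚ))))
      = (1 + Polynomial.X) *
        PowerSeries.coeff (R := Polynomial ℚ) n
          (rescale (1 + Polynomial.X) t -
            PowerSeries.C (R := Polynomial ℚ) Polynomial.X * PowerSeries.X) := by
  have := congrArg (PowerSeries.coeff (R := Polynomial ℚ) n) (series_identity t ht)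
  rwa [coeff_rescale, coeff_C_mul] at this

lemma zpow_finset_sum {G : Type*} [CommGroup G] (g : G) {α : Type*} (s : Finset α)
    (f : α → ℤ) : g ^ (∑ a ∈ s, f a) = ∏ a ∈ s, g ^ f a := by
  classical
  induction s using Finset.induction_on with
  | empty => simp
  | insert _ _ h ih => rw [Finset.sum_insert h, Finset.prod_insert h, zpow_add, ih]

theorem stmt4 (t : PowerSeries (Polynomial ℚ))
    (ht : t * (1 - rescale (-1) (PowerSeries.exp (Polynomial ℚ))) = PowerSeries.X)
    (r i : ℕ) (u : Llocˣ)
    (hu : (u : Lloc) = algebraMap (Polynomial ℚ) Lloc (1 + Polynomial.X))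
    (d : Fin r →₀ ℕ) (hd : (d.sum fun _ m => m) = i) :
    algebraMap (Polynomial ℚ) Lloc
        (MvPowerSeries.coeff (R := Polynomial ℚ) d
          (∏ j : Fin r, emb r j
            (t * (1 + PowerSeries.C (R := Polynomial ℚ) Polynomial.X *
              rescale (-1) (PowerSeries.exp (Polynomial ℚ))))))
      = ((u ^ ((r : ℤ) - (i : ℤ)) : Llocˣ) : Lloc) *
        algebraMap (Polynomial ℚ) Lloc
          (MvPowerSeries.coeff (R := Polynomial ℚ) d
            (∏ j : Fin r, emb r j
              (rescale (1 + Polynomial.X) t -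
                PowerSeries.C (R := Polynomial ℚ) Polynomial.X * PowerSeries.X))) := by
  classical
  set φ := algebraMap (Polynomial ℚ) Lloc
  set Qt := t * (1 + PowerSeries.C (R := Polynomial ℚ) Polynomial.X *
      rescale (-1) (PowerSeries.exp (Polynomial ℚ)))
  set Q := rescale (1 + Polynomial.X) t -
      PowerSeries.C (R := Polynomial ℚ) Polynomial.X * PowerSeries.X
  -- per-coefficient identity in Lloc
  have key : ∀ n : ℕ,
      φ (PowerSeries.coeff (R := Polynomial ℚ) n Qt)
        = ((u ^ ((1 : ℤ) - (n : ℤ)) : Llocˣ) : Lloc) *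
          φ (PowerSeries.coeff (R := Polynomial ℚ) n Q) := by
    intro n
    have h := congrArg φ (coeff_identity t ht n)
    rw [map_mul φ ((1 + Polynomial.X) ^ _) _, map_mul φ (1 + Polynomial.X) _,
      map_pow, ← hu] at h
    have h2 : ((u ^ (n : ℤ) : Llocˣ) : Lloc) * φ (PowerSeries.coeff (R := Polynomial ℚ) n Qt)
        = ((u ^ (1 : ℤ) : Llocˣ) : Lloc) * φ (PowerSeries.coeff (R := Polynomial ℚ) n Q) := by
      rw [zpow_natCast, zpow_one, Units.val_pow_eq_pow_val]
      exact h
    have h3 := congrArg (fun x => ((u ^ (-(n : ℤ)) : Llocˣ) : Lloc) * x) h2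
    simp only [← mul_assoc, ← Units.val_mul, ← zpow_add] at h3
    rw [neg_add_cancel, zpow_zero, Units.val_one, one_mul,
      show -(n : ℤ) + 1 = 1 - (n : ℤ) by ring] at h3
    exact h3
  rw [coeff_prod_emb, coeff_prod_emb, map_prod, map_prod]
  calc ∏ j : Fin r, φ (PowerSeries.coeff (R := Polynomial ℚ) (d j) Qt)
      = ∏ j : Fin r, (((u ^ ((1 : ℤ) - (d j : ℤ)) : Llocˣ) : Lloc) *
          φ (PowerSeries.coeff (R := Polynomial ℚ) (d j) Q)) := by
        exact Finset.prod_congr rfl fun j _ => key (d j)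
    _ = ((∏ j : Fin r, u ^ ((1 : ℤ) - (d j : ℤ)) : Llocˣ) : Lloc) *
          ∏ j : Fin r, φ (PowerSeries.coeff (R := Polynomial ℚ) (d j) Q) := by
        rw [Finset.prod_mul_distrib]
        congr 1
        exact (map_prod (Units.coeHom Lloc) _ _).symm
    _ = ((u ^ ((r : ℤ) - (i : ℤ)) : Llocˣ) : Lloc) *
          ∏ j : Fin r, φ (PowerSeries.coeff (R := Polynomial ℚ) (d j) Q) := by
        congr 2
        rw [← zpow_finset_sum]
        congr 1
        have hn : ∑ j : Fin r, d j = i := by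
          rw [← hd]
          exact (Finsupp.sum_fintype d (fun _ m => m) (fun _ => rfl)).symm
        have hsum : ∑ j : Fin r, (d j : ℤ) = (i : ℤ) := by
          rw [← Nat.cast_sum, hn]
        rw [Finset.sum_sub_distrib, hsum]
        simp
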